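/- Partial monotonicity of the state-action cost function in the nonuniform case (Lemma 6 of the paper): let V : 𝒬 → ℝ be ⊵-monotone. Then for all Q ∈ 𝒬, all u, v ∈ Fin M with v ≠ u, and all user indices k ∈ Fin K such that Q u k < N u k and Q + E_{u,k} ⊵ Q (equivalently, there exists j ≥ k with Q u j > 0), one has J_V(Q + E_{u,k}, u) − J_V(Q + E_{u,k}, v) ≤ J_V(Q, u) − J_V(Q, v), where Q + E_{u,k} denotes the state with entry (u,k) increased by 1. -/

import Mathlib

open Finset

/-- State space of the nonuniform-channel multicast MDP: request queue matrices capped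
by `N`. -/
def QS (M K : ℕ) (N : Fin M → Fin K → ℕ) : Type :=
  {Q : Fin M → Fin K → ℕ // ∀ m k, Q m k ≤ N m k}

/-- Next state when content `u` is multicast in state `Q` and arrival `a` occurs. -/
def nextQ {M K : ℕ} {N : Fin M → Fin K → ℕ} (Q : QS M K N) (u : Fin M)
    (a : Fin M → Fin K → ℕ) : QS M K N :=
  ⟨fun m k => min ((if m = u then 0 else Q.1 m k) + a m k) (N m k),
    fun _ _ => min_le_right _ _⟩

/-- Power cost of multicasting with per-user power levels `pu` to the users with pending
requests in `q`: the maximum of `pu` over `{k : q k > 0}`, and `0` if this set is empty. -/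
noncomputable def PCost {K : ℕ} (pu : Fin K → ℝ) (q : Fin K → ℕ) : ℝ :=
  if h : (Finset.univ.filter fun k => 0 < q k).Nonempty then
    (Finset.univ.filter fun k => 0 < q k).sup' h pu
  else 0

/-- Per-stage cost in the nonuniform case. -/
noncomputable def gCost {M K : ℕ} {N : Fin M → Fin K → ℕ} (wp wf : ℝ)
    (p : Fin M → Fin K → ℝ) (f : Fin M → ℝ) (Q : QS M K N) (u : Fin M) : ℝ :=
  (∑ m, ∑ k, (Q.1 m k : ℝ)) + wp * PCost (p u) (Q.1 u) + wf * f u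

/-- State-action cost function `J_V(Q,u)` in the nonuniform case. -/
noncomputable def JCost {M K : ℕ} {N : Fin M → Fin K → ℕ}
    (𝒜 : Finset (Fin M → Fin K → ℕ)) (ρ : (Fin M → Fin K → ℕ) → ℝ)
    (wp wf : ℝ) (p : Fin M → Fin K → ℝ) (f : Fin M → ℝ)
    (V : QS M K N → ℝ) (Q : QS M K N) (u : Fin M) : ℝ :=
  gCost wp wf p f Q u + ∑ a ∈ 𝒜, ρ a * V (nextQ Q u a)

/-- The partial order `q² ⊵ q¹` on per-content request queue vectors. -/
def TriVec {K : ℕ} (q₂ q₁ : Fin K → ℕ) : Prop :=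
  ∀ k : Fin K,
    ((∃ j, k ≤ j ∧ 0 < q₁ j) → q₁ k ≤ q₂ k) ∧
    ((¬ ∃ j, k ≤ j ∧ 0 < q₁ j) → q₂ k = q₁ k)

/-- The partial order `Q² ⊵ Q¹` on states: `Q² m ⊵ Q¹ m` for every content `m`. -/
def TriState {M K : ℕ} {N : Fin M → Fin K → ℕ} (Q₂ Q₁ : QS M K N) : Prop :=
  ∀ m, TriVec (Q₂.1 m) (Q₁.1 m)

/-- The state `Q + E_{u,k}`: entry `(u,k)` is increased by 1 (requires `Q u k < N u k`). -/
def addE {M K : ℕ} {N : Fin M → Fin K → ℕ} (Q : QS M K N) (u : Fin M) (k : Fin K)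
    (h : Q.1 u k < N u k) : QS M K N :=
  ⟨Function.update Q.1 u (Function.update (Q.1 u) k (Q.1 u k + 1)), by
    intro m i
    rcases eq_or_ne m u with rfl | hm
    · simp only [Function.update_self]
      rcases eq_or_ne i k with rfl | hi
      · simp only [Function.update_self]; exact h
      · simp only [Function.update_of_ne hi]; exact Q.2 m i
    · simp only [Function.update_of_ne hm]; exact Q.2 m i⟩

/-- Partial monotonicity of the state-action cost function in the nonuniform case
(Lemma 6): for a `⊵`-monotone value function `V`, whenever `Q + E_{u,k} ⊵ Q`,
`J_V(Q+E_{u,k},u) - J_V(Q+E_{u,k},v) ≤ J_V(Q,u) - J_V(Q,v)` for every `v ≠ u`. -/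
theorem J_partial_monotone
    {M K : ℕ} (hM : 1 ≤ M) (hK : 1 ≤ K) (N : Fin M → Fin K → ℕ)
    (𝒜 : Finset (Fin M → Fin K → ℕ)) (ρ : (Fin M → Fin K → ℕ) → ℝ)
    (hρ0 : ∀ a ∈ 𝒜, 0 ≤ ρ a) (hρ1 : ∑ a ∈ 𝒜, ρ a = 1)
    (wp wf : ℝ) (p : Fin M → Fin K → ℝ) (f : Fin M → ℝ)
    (hp0 : ∀ m k, 0 ≤ p m k) (hpmono : ∀ m, Monotone (p m))
    (V : QS M K N → ℝ)
    (hV : ∀ Q₁ Q₂ : QS M K N, TriState Q₂ Q₁ → V Q₁ ≤ V Q₂) :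
    ∀ (Q : QS M K N) (u v : Fin M), v ≠ u → ∀ (k : Fin K) (h : Q.1 u k < N u k),
      TriState (addE Q u k h) Q →
      JCost 𝒜 ρ wp wf p f V (addE Q u k h) u - JCost 𝒜 ρ wp wf p f V (addE Q u k h) v ≤
        JCost 𝒜 ρ wp wf p f V Q u - JCost 𝒜 ρ wp wf p f V Q v := by

  intro Q u v hvu k h hT
  set Q' := addE Q u k h with hQ'def
  have huv : u ≠ v := hvu.symm
  -- entries of Q'
  have hQ'u : ∀ i, Q'.1 u i = if i = k then Q.1 u k + 1 else Q.1 u i := by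
    intro i
    simp only [hQ'def, addE, Function.update_self]
    rcases eq_or_ne i k with rfl | hi
    · simp
    · simp [Function.update_of_ne hi, hi]
  have hQ'm : ∀ m, m ≠ u → Q'.1 m = Q.1 m := by
    intro m hm
    simp only [hQ'def, addE, Function.update_of_ne hm]
  -- there is some j ≥ k with Q u j > 0
  have hex : ∃ j, k ≤ j ∧ 0 < Q.1 u j := by
    by_contra hne
    have h2 := (hT u k).2 hne
    rw [hQ'u k, if_pos rfl] at h2
    omega
  obtain ⟨j, hkj, hj⟩ := hex
  -- sums
  have hsumu : ∑ i, Q'.1 u i = (∑ i, Q.1 u i) + 1 := by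
    have hup : Q'.1 u = Function.update (Q.1 u) k (Q.1 u k + 1) := by
      simp [hQ'def, addE]
    rw [hup, Finset.sum_update_of_mem (Finset.mem_univ k)]
    rw [← Finset.sum_erase_add Finset.univ (Q.1 u) (Finset.mem_univ k),
      Finset.sdiff_singleton_eq_erase]
    omega
  have hsumN : (∑ m, ∑ i, Q'.1 m i) = (∑ m, ∑ i, Q.1 m i) + 1 := by
    have hrow : ∀ m, (∑ i, Q'.1 m i) = (∑ i, Q.1 m i) + (if m = u then 1 else 0) := by
      intro m
      rcases eq_or_ne m u with rfl | hm
      · simpa using hsumu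
      · rw [hQ'm m hm]; simp [hm]
    rw [Finset.sum_congr rfl fun m _ => hrow m, Finset.sum_add_distrib,
      Finset.sum_ite_eq' Finset.univ u (fun _ => 1)]
    simp
  have hsum : (∑ m, ∑ i, (Q'.1 m i : ℝ)) = (∑ m, ∑ i, (Q.1 m i : ℝ)) + 1 := by
    exact_mod_cast congrArg (fun n : ℕ => (n : ℝ)) hsumN
  -- power cost
  have hS : (Finset.univ.filter fun i => 0 < Q'.1 u i)
      = insert k (Finset.univ.filter fun i => 0 < Q.1 u i) := by
    ext i
    simp only [Finset.mem_insert, Finset.mem_filter, Finset.mem_univ, true_and]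
    rw [hQ'u i]
    rcases eq_or_ne i k with rfl | hi
    · simp
    · simp [hi]
  have hjmem : j ∈ Finset.univ.filter fun i => 0 < Q.1 u i := by
    simp [hj]
  have hne : (Finset.univ.filter fun i => 0 < Q.1 u i).Nonempty := ⟨j, hjmem⟩
  have hne' : (Finset.univ.filter fun i => 0 < Q'.1 u i).Nonempty := by
    rw [hS]; exact Finset.insert_nonempty _ _
  have hP : PCost (p u) (Q'.1 u) = PCost (p u) (Q.1 u) := by
    rw [PCost, PCost, dif_pos hne, dif_pos hne']
    refine le_antisymm (Finset.sup'_le _ _ fun i hi => ?_)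
      (Finset.sup'_le _ _ fun i hi => Finset.le_sup' (f := p u)
        (by rw [hS]; exact Finset.mem_insert_of_mem hi))
    rw [hS, Finset.mem_insert] at hi
    rcases hi with rfl | hi
    · exact le_trans (hpmono u hkj) (Finset.le_sup' (f := p u) hjmem)
    · exact Finset.le_sup' (f := p u) hi
  -- next states for action u coincide
  have hnext : ∀ a, nextQ Q' u a = nextQ Q u a := by
    intro a
    apply Subtype.ext
    funext m i
    simp only [nextQ]
    rcases eq_or_ne m u with rfl | hm
    · simp
    · rw [if_neg hm, if_neg hm, hQ'm m hm]
  -- TriState for action v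
  have hTri : ∀ a, TriState (nextQ Q' v a) (nextQ Q v a) := by
    intro a m i
    have hent : ∀ (R : QS M K N) (m' : Fin M) (i' : Fin K),
        (nextQ R v a).1 m' i'
          = min ((if m' = v then 0 else R.1 m' i') + a m' i') (N m' i') :=
      fun _ _ _ => rfl
    rcases eq_or_ne m u with hmu | hm
    · constructor
      · intro _
        simp only [hent, hmu, if_neg huv]
        refine min_le_min (Nat.add_le_add_right ?_ _) le_rfl
        rcases eq_or_ne i k with rfl | hik
        · rw [hQ'u i, if_pos rfl]; omega
        · rw [hQ'u i, if_neg hik]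
      · intro hne2
        rcases eq_or_ne i k with rfl | hik
        · exfalso
          apply hne2
          refine ⟨j, hkj, ?_⟩
          simp only [hent, hmu, if_neg huv]
          have := Q.2 u j
          omega
        · simp only [hent, hmu, if_neg huv]
          rw [hQ'u i, if_neg hik]
    · have heq : (nextQ Q' v a).1 m i = (nextQ Q v a).1 m i := by
        simp only [hent]
        rcases eq_or_ne m v with rfl | hm2
        · simp
        · rw [if_neg hm2, if_neg hm2, hQ'm m hm]
      exact ⟨fun _ => heq.ge, fun _ => heq⟩
  -- combine
  have hsum2 : (∑ a ∈ 𝒜, ρ a * V (nextQ Q' u a)) = ∑ a ∈ 𝒜, ρ a * V (nextQ Q u a) :=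
    Finset.sum_congr rfl fun a _ => by rw [hnext a]
  have h1 : JCost 𝒜 ρ wp wf p f V Q' u = JCost 𝒜 ρ wp wf p f V Q u + 1 := by
    simp only [JCost, gCost, hP, hsum, hsum2]
    ring
  have hVle : (∑ a ∈ 𝒜, ρ a * V (nextQ Q v a)) ≤ ∑ a ∈ 𝒜, ρ a * V (nextQ Q' v a) :=
    Finset.sum_le_sum fun a ha =>
      mul_le_mul_of_nonneg_left (hV _ _ (hTri a)) (hρ0 a ha)
  have h2 : JCost 𝒜 ρ wp wf p f V Q v + 1 ≤ JCost 𝒜 ρ wp wf p f V Q' v := by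
    simp only [JCost, gCost, hQ'm v hvu, hsum]
    linarith
  linarith
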